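/- Let A ∈ M_2(ℂ) be nonzero with eigenvalues λ_1, λ_2 satisfying |λ_1| = |λ_2| = 0 (i.e., A is nilpotent and nonzero). Then F_N(A) is the open unit disk {z ∈ ℂ : |z| < 1}. -/

import Mathlib

open Matrix

noncomputable def fN {n : ℕ} (A : Matrix (Fin n) (Fin n) ℂ)
    (x : EuclideanSpace ℂ (Fin n)) : ℂ :=
  (inner ℂ x (Matrix.toEuclideanLin A x) : ℂ) /
    ((‖x‖ * ‖Matrix.toEuclideanLin A x‖ : ℝ) : ℂ)

noncomputable def FN {n : ℕ} (A : Matrix (Fin n) (Fin n) ℂ) : Set ℂ :=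
  {z | ∃ x : EuclideanSpace ℂ (Fin n), Matrix.toEuclideanLin A x ≠ 0 ∧ z = fN A x}

theorem stmt16 (A : Matrix (Fin 2) (Fin 2) ℂ) (hA : A ≠ 0)
    (hnil : A * A = 0) :
    FN A = Metric.ball (0 : ℂ) 1 := by
  classical
  set T : EuclideanSpace ℂ (Fin 2) →ₗ[ℂ] EuclideanSpace ℂ (Fin 2) :=
    Matrix.toEuclideanLin A with hTdef
  have hTT : ∀ x, T (T x) = 0 := by
    intro x
    have h1 : Matrix.toEuclideanLin (A * A) x = T (T x) := by
      simp [hTdef, Matrix.toEuclideanLin_apply, Matrix.mulVec_mulVec]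
    rw [← h1, hnil]
    simp
  ext z
  simp only [FN, Set.mem_setOf_eq, Metric.mem_ball, dist_zero_right]
  constructor
  · rintro ⟨x, hx, rfl⟩
    have hxne : x ≠ 0 := by
      intro h
      exact hx (by rw [h, map_zero])
    have hd : 0 < ‖x‖ * ‖T x‖ := mul_pos (norm_pos_iff.2 hxne) (norm_pos_iff.2 hx)
    have hlt : ‖(inner ℂ x (T x) : ℂ)‖ < ‖x‖ * ‖T x‖ := by
      rcases lt_or_eq_of_le (norm_inner_le_norm (𝕜 := ℂ) x (T x)) with h | h
      · exact h
      · exfalso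
        obtain ⟨r, hr, hxr⟩ := (norm_inner_eq_norm_iff hxne hx).1 h
        have h0 : r • T x = 0 := by rw [← _root_.map_smul, ← hxr]; exact hTT x
        exact hx (by simpa [hr] using h0)
    have : fN A x = (inner ℂ x (T x) : ℂ) / ((‖x‖ * ‖T x‖ : ℝ) : ℂ) := rfl
    rw [this, norm_div]
    rw [Complex.norm_real, Real.norm_eq_abs, abs_of_pos hd]
    exact (div_lt_one hd).2 hlt
  · intro hz
    -- construct u, w
    have hTne : ∃ v, T v ≠ 0 := by
      by_contra h
      push_neg at h
      apply hA
      have hT0 : T = 0 := LinearMap.ext fun v => h v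
      exact (LinearEquiv.map_eq_zero_iff (Matrix.toEuclideanLin)).1 hT0
    obtain ⟨v, hv⟩ := hTne
    set u : EuclideanSpace ℂ (Fin 2) := T v with hudef
    have hu : u ≠ 0 := hv
    have hun : (0:ℝ) < ‖u‖ := norm_pos_iff.2 hu
    have hTu : T u = 0 := hTT v
    set w : EuclideanSpace ℂ (Fin 2) :=
      v - ((inner ℂ u v : ℂ) / ((‖u‖ : ℂ) ^ 2)) • u with hwdef
    have hun' : ((‖u‖ : ℂ)) ^ 2 ≠ 0 := by
      apply pow_ne_zero
      simp only [ne_eq, Complex.ofReal_eq_zero]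
      positivity
    have hself : (inner ℂ u u : ℂ) = ((‖u‖ : ℂ)) ^ 2 := inner_self_eq_norm_sq_to_K u
    have hTw : T w = u := by
      rw [hwdef, map_sub, _root_.map_smul, hTu, smul_zero, sub_zero]
    have huw : (inner ℂ u w : ℂ) = 0 := by
      rw [hwdef, inner_sub_right, inner_smul_right,
        hself, div_mul_cancel₀ _ hun', sub_self]
    have hw : w ≠ 0 := by
      intro h
      exact hu (by rw [← hTw, h, map_zero])
    have hwn : (0:ℝ) < ‖w‖ := norm_pos_iff.2 hw
    set r : ℝ := ‖z‖ with hrdef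
    have hr0 : 0 ≤ r := norm_nonneg z
    have hr1 : r < 1 := hz
    have h1r : 0 < 1 - r ^ 2 := by nlinarith
    have hsq : 0 < Real.sqrt (1 - r ^ 2) := Real.sqrt_pos.2 h1r
    set t : ℝ := 1 / Real.sqrt (1 - r ^ 2) with htdef
    have ht : 0 < t := by positivity
    have ht2 : t ^ 2 * (1 - r ^ 2) = 1 := by
      rw [htdef, div_pow, one_pow, Real.sq_sqrt h1r.le]
      field_simp
    set α : ℂ := (starRingEnd ℂ) z * ((t / ‖u‖ : ℝ) : ℂ) with hαdef
    set β : ℂ := ((1 / ‖w‖ : ℝ) : ℂ) with hβdef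
    have hβ : β ≠ 0 := by
      rw [hβdef]
      simp only [ne_eq, Complex.ofReal_eq_zero]
      positivity
    set x : EuclideanSpace ℂ (Fin 2) := α • u + β • w with hxdef
    have hTx : T x = β • u := by
      rw [hxdef, map_add, _root_.map_smul, _root_.map_smul, hTu, hTw,
        smul_zero, zero_add]
    have hTxne : T x ≠ 0 := by
      rw [hTx]
      exact smul_ne_zero hβ hu
    -- norms
    have hαn : ‖α‖ = r * t / ‖u‖ := by
      rw [hαdef, norm_mul, RCLike.norm_conj, Complex.norm_real,
        Real.norm_eq_abs, abs_of_pos (by positivity), ← hrdef, mul_div_assoc]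
    have hβn : ‖β‖ = 1 / ‖w‖ := by
      rw [hβdef, Complex.norm_real, Real.norm_eq_abs, abs_of_pos (by positivity)]
    have hxu : ‖α • u‖ = r * t := by
      rw [norm_smul, hαn, div_mul_cancel₀ _ hun.ne']
    have hxw : ‖β • w‖ = 1 := by
      rw [norm_smul, hβn, one_div_mul_cancel hwn.ne']
    have horth : (inner ℂ (α • u) (β • w) : ℂ) = 0 := by
      rw [inner_smul_left, inner_smul_right, huw]
      ring
    have hxsq : ‖x‖ ^ 2 = t ^ 2 := by
      have hp := norm_add_sq_eq_norm_sq_add_norm_sq_of_inner_eq_zero _ _ horth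
      rw [hxu, hxw] at hp
      have hx2 : ‖x‖ * ‖x‖ = r * t * (r * t) + 1 * 1 := by rw [hxdef]; exact hp
      have hgoal : ‖x‖ ^ 2 = r ^ 2 * t ^ 2 + 1 := by rw [sq, hx2]; ring
      rw [hgoal]
      linear_combination -ht2
    have hxn : ‖x‖ = t := by
      rw [← Real.sqrt_sq (norm_nonneg x), hxsq, Real.sqrt_sq ht.le]
    have hTxn : ‖T x‖ = ‖u‖ / ‖w‖ := by
      rw [hTx, norm_smul, hβn, div_mul_eq_mul_div, one_mul]
    have hinner : (inner ℂ x (T x) : ℂ) = (starRingEnd ℂ) α * β * ((‖u‖ : ℂ) ^ 2) := by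
      rw [hxdef, hTx, inner_add_left, inner_smul_left, inner_smul_left,
        inner_smul_right, inner_smul_right, hself]
      have hwu : (inner ℂ w u : ℂ) = 0 := by
        rw [← inner_conj_symm, huw, map_zero]
      rw [hwu]
      ring
    have hconjα : (starRingEnd ℂ) α = z * ((t / ‖u‖ : ℝ) : ℂ) := by
      rw [hαdef, _root_.map_mul, Complex.conj_conj, Complex.conj_ofReal]
    refine ⟨x, hTxne, ?_⟩
    have : fN A x = (inner ℂ x (T x) : ℂ) / ((‖x‖ * ‖T x‖ : ℝ) : ℂ) := rfl
    rw [this, hinner, hconjα, hxn, hTxn, hβdef]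
    have hun'' : (‖u‖ : ℂ) ≠ 0 := by
      simp only [ne_eq, Complex.ofReal_eq_zero]; positivity
    have hwn' : (‖w‖ : ℂ) ≠ 0 := by
      simp only [ne_eq, Complex.ofReal_eq_zero]; positivity
    have htn' : (t : ℂ) ≠ 0 := by
      simp only [ne_eq, Complex.ofReal_eq_zero]; positivity
    push_cast
    field_simp
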